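/- Let p, k be primes with k ≤ p, and suppose there exists a Z/kZ-covering family F₁ of N vectors in (Z/kZ)^{ℓ₁}. Then there exists a [0,k-1]-covering family F₂ of N vectors in (Z/pZ)^{2ℓ₁·⌈log₂ k⌉}, where [0,k-1]-covering means: for every pair of distinct vectors and every integer k' with 0 ≤ k' ≤ k-1, some coordinate difference equals k' mod p. -/

import Mathlib

lemma exists_bit_lt {a b : ℕ} (h : a < b) :
    ∃ j, Nat.testBit a j = false ∧ Nat.testBit b j = true := by
  have hne : a ^^^ b ≠ 0 := by
    intro h0
    have := xor_eq_zero_iff.mp h0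
    omega
  obtain ⟨i, hi, hi'⟩ := Nat.exists_most_significant_bit hne
  have hdiff : Nat.testBit a i ≠ Nat.testBit b i := by
    intro he
    rw [Nat.testBit_xor, he] at hi
    simp at hi
  have heq : ∀ j, i < j → Nat.testBit a j = Nat.testBit b j := by
    intro j hj
    have := hi' j hj
    rw [Nat.testBit_xor] at this
    simpa using this
  cases ha : Nat.testBit a i with
  | false =>
    cases hb : Nat.testBit b i with
    | false => exact absurd (ha.trans hb.symm) hdiff
    | true => exact ⟨i, ha, hb⟩
  | true =>
    cases hb : Nat.testBit b i with
    | false =>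
      exact absurd (Nat.lt_of_testBit i hb ha fun j hj => (heq j hj).symm) (by omega)
    | true => exact absurd (ha.trans hb.symm) hdiff

def enc6 (p k ℓ₁ : ℕ) (u : Fin ℓ₁ → ZMod k) (i : Fin (2 * ℓ₁ * Nat.clog 2 k)) : ZMod p :=
  if h : ℓ₁ = 0 then 0
  else if i.val / ℓ₁ < Nat.clog 2 k ∧
      Nat.testBit (u ⟨i.val % ℓ₁, Nat.mod_lt _ (Nat.pos_of_ne_zero h)⟩).val (i.val / ℓ₁) = false
    then (((u ⟨i.val % ℓ₁, Nat.mod_lt _ (Nat.pos_of_ne_zero h)⟩).val + k : ℕ) : ZMod p)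
    else ((u ⟨i.val % ℓ₁, Nat.mod_lt _ (Nat.pos_of_ne_zero h)⟩).val : ZMod p)

lemma enc6_eval (p k ℓ₁ : ℕ) (u : Fin ℓ₁ → ZMod k) (j : ℕ) (i : Fin ℓ₁)
    (hidx : j * ℓ₁ + i.val < 2 * ℓ₁ * Nat.clog 2 k) :
    enc6 p k ℓ₁ u ⟨j * ℓ₁ + i.val, hidx⟩ =
      if j < Nat.clog 2 k ∧ Nat.testBit (u i).val j = false
      then (((u i).val + k : ℕ) : ZMod p) else (((u i).val : ℕ) : ZMod p) := by
  have hℓ : ℓ₁ ≠ 0 := by rintro rfl; exact absurd i.isLt (by omega)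
  have hmod : (j * ℓ₁ + i.val) % ℓ₁ = i.val := by
    rw [mul_comm, Nat.mul_add_mod, Nat.mod_eq_of_lt i.isLt]
  have hdiv : (j * ℓ₁ + i.val) / ℓ₁ = j := by
    rw [mul_comm, Nat.mul_add_div (Nat.pos_of_ne_zero hℓ), Nat.div_eq_of_lt i.isLt, add_zero]
  unfold enc6
  rw [dif_neg hℓ]
  simp only [hmod, hdiv, Fin.eta]

theorem stmt6 (p k ℓ₁ N : ℕ) (hp : p.Prime) (hk : k.Prime) (hkp : k ≤ p)
    (F₁ : Finset (Fin ℓ₁ → ZMod k)) (hcard : F₁.card = N)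
    (hcov : ∀ v ∈ F₁, ∀ w ∈ F₁, v ≠ w → ∀ s : ZMod k, ∃ i, v i - w i = s) :
    ∃ F₂ : Finset (Fin (2 * ℓ₁ * Nat.clog 2 k) → ZMod p),
      F₂.card = N ∧
      ∀ v ∈ F₂, ∀ w ∈ F₂, v ≠ w →
        ∀ k' : ℕ, k' ≤ k - 1 → ∃ i, v i - w i = (k' : ZMod p) := by
  haveI : NeZero k := ⟨hk.pos.ne'⟩
  haveI : NeZero p := ⟨hp.pos.ne'⟩
  set L := Nat.clog 2 k with hLdef
  have hk2 : 2 ≤ k := hk.two_le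
  have hL : 0 < L := Nat.clog_pos one_lt_two hk2
  have hkpow : k ≤ 2 ^ L := Nat.le_pow_clog one_lt_two k
  -- injectivity of enc6 on everything
  have hinj : ∀ u w : Fin ℓ₁ → ZMod k, enc6 p k ℓ₁ u = enc6 p k ℓ₁ w → u = w := by
    intro u w he
    funext i
    have hidx : L * ℓ₁ + i.val < 2 * ℓ₁ * L := by
      have h1 : i.val < ℓ₁ := i.isLt
      nlinarith [i.isLt, hL]
    have h1 := congrFun he ⟨L * ℓ₁ + i.val, hidx⟩
    rw [enc6_eval, enc6_eval] at h1
    rw [if_neg (by simp [hLdef]), if_neg (by simp [hLdef])] at h1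
    have hu : (u i).val < p := lt_of_lt_of_le (ZMod.val_lt _) hkp
    have hw : (w i).val < p := lt_of_lt_of_le (ZMod.val_lt _) hkp
    have : (u i).val = (w i).val := by
      have := congrArg ZMod.val h1
      rwa [ZMod.val_cast_of_lt hu, ZMod.val_cast_of_lt hw] at this
    exact ZMod.val_injective k this
  refine ⟨F₁.image (enc6 p k ℓ₁), ?_, ?_⟩
  · rw [Finset.card_image_of_injective _ hinj, hcard]
  · rintro v hv w hw hvw k' hk'
    obtain ⟨u, hu, rfl⟩ := Finset.mem_image.mp hv
    obtain ⟨u', hu', rfl⟩ := Finset.mem_image.mp hw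
    have hne : u ≠ u' := fun h => hvw (by rw [h])
    obtain ⟨i, hi⟩ := hcov u hu u' hu' hne (k' : ZMod k)
    set a := (u i).val with hadef
    set b := (u' i).val with hbdef
    have ha : a < k := ZMod.val_lt _
    have hb : b < k := ZMod.val_lt _
    have hk'k : k' < k := by omega
    have h2 : (((a : ℤ) - b - k' : ℤ) : ZMod k) = 0 := by
      push_cast
      rw [hadef, hbdef, ZMod.natCast_val, ZMod.natCast_val, ZMod.cast_id, ZMod.cast_id]
      rw [sub_eq_zero]
      exact hi
    obtain ⟨c, hc⟩ := (ZMod.intCast_zmod_eq_zero_iff_dvd _ _).mp h2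
    have hc01 : c = 0 ∨ c = -1 := by
      by_contra hcon
      push_neg at hcon
      have hkZ : (0:ℤ) < k := by exact_mod_cast hk.pos
      rcases (by omega : c ≥ 1 ∨ c ≤ -2) with h | h
      · have : (k:ℤ) * 1 ≤ k * c := by
          apply mul_le_mul_of_nonneg_left h (le_of_lt hkZ)
        have haZ : (a:ℤ) < k := by exact_mod_cast ha
        have hbZ : (0:ℤ) ≤ b := Int.natCast_nonneg b
        have hkZ' : (0:ℤ) ≤ k' := Int.natCast_nonneg k'
        linarith
      · have : (k:ℤ) * c ≤ k * (-2) := by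
          apply mul_le_mul_of_nonneg_left h (le_of_lt hkZ)
        have hbZ : (b:ℤ) < k := by exact_mod_cast hb
        have hkZ'' : (k':ℤ) < k := by exact_mod_cast hk'k
        have haZ : (0:ℤ) ≤ a := Int.natCast_nonneg a
        linarith
    rcases hc01 with rfl | rfl
    · -- a = b + k'
      have haeq : a = b + k' := by omega
      have hidx : L * ℓ₁ + i.val < 2 * ℓ₁ * L := by nlinarith [i.isLt, hL]
      refine ⟨⟨L * ℓ₁ + i.val, hidx⟩, ?_⟩
      rw [enc6_eval, enc6_eval, if_neg (by simp [hLdef]), if_neg (by simp [hLdef]), ← hadef, ← hbdef, haeq]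
      push_cast
      ring
    · -- a + k = b + k'
      have haeq : a + k = b + k' := by omega
      have hab : a < b := by omega
      obtain ⟨j, hja, hjb⟩ := exists_bit_lt hab
      have hjL : j < L := by
        have h2j : 2 ^ j ≤ b := by
          by_contra hcon
          push_neg at hcon
          rw [Nat.testBit_eq_false_of_lt hcon] at hjb
          exact Bool.false_ne_true hjb
        have : 2 ^ j < 2 ^ L := lt_of_le_of_lt h2j (lt_of_lt_of_le hb hkpow)
        exact (Nat.pow_lt_pow_iff_right one_lt_two).mp this
      have hidx : j * ℓ₁ + i.val < 2 * ℓ₁ * L := by nlinarith [i.isLt, hL, hjL]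
      refine ⟨⟨j * ℓ₁ + i.val, hidx⟩, ?_⟩
      rw [enc6_eval, enc6_eval, if_pos ⟨hjL, by rw [← hadef]; exact hja⟩,
        if_neg (by rw [← hbdef, hjb]; simp), ← hadef, ← hbdef, haeq]
      push_cast
      ring
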